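/- Fix an integer n ≥ 1, complex constants α_0, α_1, …, α_n, and an index 1 ≤ l ≤ n. Define the vector field Z : ℂⁿ → ℂⁿ by Z(x) = α_0 · u(x) · D(x) − u(x) · Σ_{m=1}^n α_m · Y^m_m(x), where D(x)_i = x_i. Then [Y^l_l, Z](x) = 0 for every x ∈ ℂⁿ with u(x) ≠ 0. -/

import Mathlib

/-- `u x = ∑ j x_j`. -/
noncomputable def u (n : ℕ) (x : Fin n → ℂ) : ℂ := ∑ j, x j

/-- The vector fields `Y^l_m`, with components
`Y^l_m(x)_i = x_m * u(x)^(l-m-1) * (x_i - δ_{i,l} u(x))` (integer power); in particular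
the diagonal ones are `Y^m_m(x)_i = x_m * u(x)⁻¹ * (x_i - δ_{i,m} u(x))`. -/
noncomputable def Y (n : ℕ) (l m : Fin n) (x : Fin n → ℂ) : Fin n → ℂ :=
  fun i => x m * u n x ^ ((l : ℤ) - (m : ℤ) - 1) * (x i - if i = l then u n x else 0)

/-- The Lie bracket `[V,W](x) = DW(x)·V(x) - DV(x)·W(x)`. -/
noncomputable def lieBracket (n : ℕ) (V W : (Fin n → ℂ) → Fin n → ℂ)
    (x : Fin n → ℂ) : Fin n → ℂ :=
  fderiv ℂ W x (V x) - fderiv ℂ V x (W x)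

noncomputable def uL (n : ℕ) : (Fin n → ℂ) →L[ℂ] ℂ := ∑ j, ContinuousLinearMap.proj j

lemma uL_apply (n : ℕ) (v : Fin n → ℂ) : uL n v = u n v := by
  simp [uL, u]

lemma hasFDerivAt_u (n : ℕ) (x : Fin n → ℂ) : HasFDerivAt (u n) (uL n) x := by
  have h : u n = ⇑(uL n) := by funext y; rw [uL_apply]
  rw [h]; exact (uL n).hasFDerivAt

noncomputable def Yd (n : ℕ) (l i : Fin n) (x : Fin n → ℂ) : (Fin n → ℂ) →L[ℂ] ℂ :=
  (x l * (u n x)⁻¹) • (ContinuousLinearMap.proj i - if i = l then uL n else 0)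
  + (x i - if i = l then u n x else 0) •
      (x l • ((-(ContinuousLinearMap.mulLeftRight ℂ ℂ (u n x)⁻¹ (u n x)⁻¹)).comp (uL n))
        + (u n x)⁻¹ • ContinuousLinearMap.proj l)

lemma Yd_apply (n : ℕ) (l i : Fin n) (x v : Fin n → ℂ) (hx : u n x ≠ 0) :
    Yd n l i x v =
      (v l * (u n x)⁻¹ - x l * u n v * ((u n x)^2)⁻¹) * (x i - if i = l then u n x else 0)
      + x l * (u n x)⁻¹ * (v i - if i = l then u n v else 0) := by
  by_cases hil : i = l
  · simp only [Yd, hil, if_pos rfl, ContinuousLinearMap.add_apply,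
      ContinuousLinearMap.smul_apply, ContinuousLinearMap.sub_apply,
      ContinuousLinearMap.proj_apply, ContinuousLinearMap.comp_apply,
      ContinuousLinearMap.neg_apply, ContinuousLinearMap.mulLeftRight_apply, uL_apply,
      smul_eq_mul, if_true]
    field_simp [uL_apply]
    ring
  · simp only [Yd, if_neg hil, ContinuousLinearMap.add_apply,
      ContinuousLinearMap.smul_apply, ContinuousLinearMap.sub_apply,
      ContinuousLinearMap.proj_apply, ContinuousLinearMap.comp_apply,
      ContinuousLinearMap.neg_apply, ContinuousLinearMap.mulLeftRight_apply, uL_apply,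
      ContinuousLinearMap.zero_apply, smul_eq_mul]
    field_simp [uL_apply]
    ring

lemma hasFDerivAt_Yc (n : ℕ) (l i : Fin n) (x : Fin n → ℂ) (hx : u n x ≠ 0) :
    HasFDerivAt (fun y => Y n l l y i) (Yd n l i x) x := by
  have hfun : (fun y => Y n l l y i) =
      fun y : Fin n → ℂ => y l * (u n y)⁻¹ * (y i - if i = l then u n y else 0) := by
    funext y
    simp only [Y]
    rw [show ((l : ℤ) - (l : ℤ) - 1) = -1 by ring, zpow_neg_one]
  have hl : HasFDerivAt (𝕜 := ℂ) (fun y : Fin n → ℂ => y l) (ContinuousLinearMap.proj l) x :=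
    hasFDerivAt_apply (𝕜 := ℂ) l x
  have hu := hasFDerivAt_u n x
  have hinv : HasFDerivAt (fun y : Fin n → ℂ => (u n y)⁻¹)
      ((-(ContinuousLinearMap.mulLeftRight ℂ ℂ (u n x)⁻¹ (u n x)⁻¹)).comp (uL n)) x :=
    (hasFDerivAt_inv' hx).comp x hu
  have h1 := hl.mul hinv
  have hsub : HasFDerivAt (fun y : Fin n → ℂ => y i - if i = l then u n y else 0)
      (ContinuousLinearMap.proj i - if i = l then uL n else 0) x := by
    have hi : HasFDerivAt (𝕜 := ℂ) (fun y : Fin n → ℂ => y i) (ContinuousLinearMap.proj i) x :=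
      hasFDerivAt_apply (𝕜 := ℂ) i x
    by_cases hil : i = l
    · simp only [hil, eq_self_iff_true, if_true]
      exact (hasFDerivAt_apply (𝕜 := ℂ) l x).sub hu
    · simp only [if_neg hil, sub_zero]
      exact hi
  have h := h1.mul hsub
  rw [hfun]
  exact h

noncomputable def AL (n : ℕ) (α : Fin n → ℂ) : (Fin n → ℂ) →L[ℂ] ℂ :=
  ∑ m, α m • ContinuousLinearMap.proj m

lemma AL_apply (n : ℕ) (α : Fin n → ℂ) (v : Fin n → ℂ) : AL n α v = ∑ m, α m * v m := by
  simp [AL]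

lemma hasFDerivAt_A (n : ℕ) (α : Fin n → ℂ) (x : Fin n → ℂ) :
    HasFDerivAt (fun y : Fin n → ℂ => ∑ m, α m * y m) (AL n α) x := by
  have h : (fun y : Fin n → ℂ => ∑ m, α m * y m) = ⇑(AL n α) := by
    funext y; rw [AL_apply]
  rw [h]; exact (AL n α).hasFDerivAt

noncomputable def Pd (n : ℕ) (α₀ : ℂ) (α : Fin n → ℂ) (i : Fin n) (x : Fin n → ℂ) :
    (Fin n → ℂ) →L[ℂ] ℂ :=
  x i • ((α₀ + α i) • uL n - AL n α)
  + ((α₀ + α i) * u n x - ∑ m, α m * x m) • ContinuousLinearMap.proj i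

lemma Pd_apply (n : ℕ) (α₀ : ℂ) (α : Fin n → ℂ) (i : Fin n) (x v : Fin n → ℂ) :
    Pd n α₀ α i x v =
      v i * ((α₀ + α i) * u n x - ∑ m, α m * x m)
      + x i * ((α₀ + α i) * u n v - ∑ m, α m * v m) := by
  simp only [Pd, ContinuousLinearMap.add_apply, ContinuousLinearMap.smul_apply,
    ContinuousLinearMap.sub_apply, ContinuousLinearMap.proj_apply, uL_apply, AL_apply,
    smul_eq_mul]
  ring

lemma hasFDerivAt_P (n : ℕ) (α₀ : ℂ) (α : Fin n → ℂ) (i : Fin n) (x : Fin n → ℂ) :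
    HasFDerivAt (fun y : Fin n → ℂ => y i * ((α₀ + α i) * u n y - ∑ m, α m * y m))
      (Pd n α₀ α i x) x := by
  have hi : HasFDerivAt (𝕜 := ℂ) (fun y : Fin n → ℂ => y i) (ContinuousLinearMap.proj i) x :=
    hasFDerivAt_apply (𝕜 := ℂ) i x
  have hu := hasFDerivAt_u n x
  have hd : HasFDerivAt (fun y : Fin n → ℂ => (α₀ + α i) * u n y - ∑ m, α m * y m)
      ((α₀ + α i) • uL n - AL n α) x := (hu.const_mul (α₀ + α i)).sub (hasFDerivAt_A n α x)
  exact hi.mul hd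

lemma Y_val (n : ℕ) (l : Fin n) (x : Fin n → ℂ) (j : Fin n) :
    Y n l l x j = x l * (u n x)⁻¹ * (x j - if j = l then u n x else 0) := by
  simp only [Y]
  rw [show ((l : ℤ) - (l : ℤ) - 1) = -1 by ring, zpow_neg_one]

lemma Z_pointwise (n : ℕ) (α₀ : ℂ) (α : Fin n → ℂ) (y : Fin n → ℂ) (hy : u n y ≠ 0)
    (i : Fin n) :
    α₀ * u n y * y i - u n y * ∑ m : Fin n, α m * Y n m m y i
      = y i * ((α₀ + α i) * u n y - ∑ m, α m * y m) := by
  have h1 : ∀ m : Fin n, α m * Y n m m y i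
      = α m * y m * (u n y)⁻¹ * y i - if i = m then α m * y m else 0 := by
    intro m
    rw [Y_val]
    by_cases him : i = m
    · simp only [him, eq_self_iff_true, if_true]
      field_simp
    · simp only [if_neg him, sub_zero]
      ring
  simp_rw [h1]
  rw [Finset.sum_sub_distrib, Finset.sum_ite_eq]
  simp only [Finset.mem_univ, if_true]
  rw [show (∑ m, α m * y m * (u n y)⁻¹ * y i) = (∑ m, α m * y m) * ((u n y)⁻¹ * y i) by
    rw [Finset.sum_mul]; exact Finset.sum_congr rfl fun m _ => by ring]
  field_simp
  ring

/-- with `Z = α₀ u D - u ∑_m α_m Y^m_m` (where `D(x)_i = x_i`),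
every diagonal field `Y^l_l` commutes with `Z` on `{u ≠ 0}`. -/
theorem stmt_9 (n : ℕ) (hn : 1 ≤ n) (α₀ : ℂ) (α : Fin n → ℂ) (l : Fin n)
    (Z : (Fin n → ℂ) → Fin n → ℂ)
    (hZ : ∀ x i, Z x i = α₀ * u n x * x i - u n x * ∑ m : Fin n, α m * Y n m m x i) :
    ∀ x : Fin n → ℂ, u n x ≠ 0 → lieBracket n (Y n l l) Z x = 0 := by
  intro x hx
  have hZx : ∀ i, Z x i = x i * ((α₀ + α i) * u n x - ∑ m, α m * x m) := fun i =>
    (hZ x i).trans (Z_pointwise n α₀ α x hx i)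
  -- derivative of Y
  have hYd : HasFDerivAt (Y n l l) (ContinuousLinearMap.pi fun i => Yd n l i x) x := by
    refine hasFDerivAt_pi'.2 fun i => ?_
    rw [ContinuousLinearMap.proj_pi]
    exact hasFDerivAt_Yc n l i x hx
  -- derivative of Z
  have hcont : Continuous (u n) := by
    unfold u
    exact continuous_finset_sum _ fun j _ => continuous_apply j
  have hopen : IsOpen {y : Fin n → ℂ | u n y ≠ 0} :=
    isOpen_compl_singleton.preimage hcont
  have heq : Z =ᶠ[nhds x] fun y i => y i * ((α₀ + α i) * u n y - ∑ m, α m * y m) := by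
    filter_upwards [hopen.mem_nhds hx] with y hy
    funext i
    rw [hZ]
    exact Z_pointwise n α₀ α y hy i
  have hZd : fderiv ℂ Z x = ContinuousLinearMap.pi fun i => Pd n α₀ α i x := by
    rw [heq.fderiv_eq]
    refine HasFDerivAt.fderiv ?_
    refine hasFDerivAt_pi'.2 fun i => ?_
    rw [ContinuousLinearMap.proj_pi]
    exact hasFDerivAt_P n α₀ α i x
  -- sum identities
  have L1 : u n (Y n l l x) = 0 := by
    show (∑ j, Y n l l x j) = 0
    simp_rw [Y_val]
    rw [show (∑ j, x l * (u n x)⁻¹ * (x j - if j = l then u n x else 0))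
        = x l * (u n x)⁻¹ * ∑ j, (x j - if j = l then u n x else 0) by
      rw [Finset.mul_sum]]
    rw [Finset.sum_sub_distrib, Finset.sum_ite_eq', if_pos (Finset.mem_univ l)]
    show x l * (u n x)⁻¹ * (u n x - u n x) = 0
    rw [sub_self, mul_zero]
  have L2 : (∑ m, α m * Y n l l x m)
      = x l * (u n x)⁻¹ * ((∑ m, α m * x m) - α l * u n x) := by
    have h1 : ∀ m : Fin n, α m * Y n l l x m
        = x l * (u n x)⁻¹ * (α m * x m) - if m = l then x l * (u n x)⁻¹ * (α m * u n x) else 0 := by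
      intro m
      rw [Y_val]
      by_cases hm : m = l
      · simp only [hm, eq_self_iff_true, if_true]
        ring
      · simp only [if_neg hm, sub_zero]
        ring
    simp_rw [h1]
    rw [Finset.sum_sub_distrib, Finset.sum_ite_eq', if_pos (Finset.mem_univ l), ← Finset.mul_sum]
    ring
  have L3 : u n (Z x) = α₀ * u n x * u n x := by
    show (∑ j, Z x j) = α₀ * u n x * u n x
    have h1 : ∀ j : Fin n, Z x j
        = (α₀ * u n x - ∑ m, α m * x m) * x j + u n x * (α j * x j) := by
      intro j
      rw [hZx]
      ring
    simp_rw [h1]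
    rw [Finset.sum_add_distrib, ← Finset.mul_sum, ← Finset.mul_sum]
    show (α₀ * u n x - ∑ m, α m * x m) * u n x + u n x * ∑ m, α m * x m = α₀ * u n x * u n x
    ring
  -- final computation
  funext i
  show (fderiv ℂ Z x (Y n l l x) - fderiv ℂ (Y n l l) x (Z x)) i = 0
  rw [hZd, hYd.fderiv]
  simp only [Pi.sub_apply, Pi.zero_apply, ContinuousLinearMap.pi_apply]
  rw [Pd_apply, Yd_apply n l i x (Z x) hx, L1, L2, L3, hZx l, hZx i, Y_val]
  by_cases hil : i = l
  · simp only [hil, eq_self_iff_true, if_true]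
    field_simp
    ring
  · simp only [if_neg hil, sub_zero]
    field_simp
    ring
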